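/- Let l be a real number with l ≥ 4. Then each of the four points (1, 2), (1, (2l−4)/l), (l/(3l−4), 2(l−2)/(3l−4)) and ((3l−4)/l, 2(l−2)/l) is a solution of the system v₁ = 0, v₂ = 0, and all four points have both coordinates positive. (These are the singularities at infinity of the normalized Ricci flow on the generalized Wallach space SO(2l)/U(1)×U(l−1).) -/

import Mathlib

/-- First polynomial of the compactified normalized Ricci flow at infinity for the
generalized Wallach space SO(2l)/U(1)×U(l-1). -/
noncomputable def v₁ (l z₁ z₂ : ℝ) : ℝ :=
  2 * (l + 2) * (z₁ - 1) * z₁ * ((l - 2) * (z₁ + 1) - 2 * (l - 1) * z₂)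

/-- Second polynomial of the compactified normalized Ricci flow at infinity for the
generalized Wallach space SO(2l)/U(1)×U(l-1). -/
noncomputable def v₂ (l z₁ z₂ : ℝ) : ℝ :=
  (l + 2) * z₂ * (l * (-4 * z₁ * z₂ + z₁ * (z₁ + 4) + z₂ ^ 2 - 1)
    - 4 * z₁ * (z₁ - z₂ + 1))

theorem wallach_so2l_four_singularities (l : ℝ) (hl : 4 ≤ l) :
    (v₁ l 1 2 = 0 ∧ v₂ l 1 2 = 0 ∧ (0 : ℝ) < 1 ∧ (0 : ℝ) < 2) ∧
    (v₁ l 1 ((2 * l - 4) / l) = 0 ∧ v₂ l 1 ((2 * l - 4) / l) = 0 ∧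
      (0 : ℝ) < 1 ∧ 0 < (2 * l - 4) / l) ∧
    (v₁ l (l / (3 * l - 4)) (2 * (l - 2) / (3 * l - 4)) = 0 ∧
      v₂ l (l / (3 * l - 4)) (2 * (l - 2) / (3 * l - 4)) = 0 ∧
      0 < l / (3 * l - 4) ∧ 0 < 2 * (l - 2) / (3 * l - 4)) ∧
    (v₁ l ((3 * l - 4) / l) (2 * (l - 2) / l) = 0 ∧
      v₂ l ((3 * l - 4) / l) (2 * (l - 2) / l) = 0 ∧
      0 < (3 * l - 4) / l ∧ 0 < 2 * (l - 2) / l) := by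
  have hl0 : (0:ℝ) < l := by linarith
  have hl0' : l ≠ 0 := ne_of_gt hl0
  have h3 : (0:ℝ) < 3 * l - 4 := by linarith
  have h3' : (3 * l - 4) ≠ 0 := ne_of_gt h3
  refine ⟨⟨by simp [v₁], by simp only [v₂]; ring, one_pos, two_pos⟩,
    ⟨by simp [v₁], ?_, one_pos, by apply div_pos <;> linarith⟩,
    ⟨?_, ?_, by apply div_pos <;> linarith, by apply div_pos <;> linarith⟩,
    ⟨?_, ?_, by apply div_pos <;> linarith, by apply div_pos <;> linarith⟩⟩
  · simp only [v₂]; field_simp; ring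
  · simp only [v₁]; field_simp [show l * 3 - 4 ≠ 0 by intro h; exact h3' (by linarith)]; ring
  · simp only [v₂]; field_simp [show l * 3 - 4 ≠ 0 by intro h; exact h3' (by linarith)]; ring
  · simp only [v₁]; field_simp; ring
  · simp only [v₂]; field_simp; ring
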